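/- Let X and Y be finite-dimensional indecomposable Λ-modules. Then ΛG ⊗_Λ X ≅ ΛG ⊗_Λ Y as ΛG-modules if and only if Y ≅ {}^{g}X as Λ-modules for some g ∈ G. -/

import Mathlib

/-! Common framework: twisted modules, skew group algebras (characterized by their
universal basis property), restriction of scalars, coset sums, indecomposability. -/

noncomputable section

section Framework

variable {k Λ G A : Type} [Field k] [Ring Λ] [Algebra k Λ] [Group G]

/-- The twisted module `{}^{g}X` : the same underlying abelian group as `X`, with the
`Λ`-action `a · x = (φ g)⁻¹ (a) • x`. -/
def Twisted (_φ : G →* (Λ ≃ₐ[k] Λ)) (_g : G) (X : Type) : Type := X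

instance Twisted.instAddCommGroup (φ : G →* (Λ ≃ₐ[k] Λ)) (g : G) (X : Type) [AddCommGroup X] :
    AddCommGroup (Twisted φ g X) := inferInstanceAs (AddCommGroup X)

instance Twisted.instModule (φ : G →* (Λ ≃ₐ[k] Λ)) (g : G) (X : Type) [AddCommGroup X]
    [Module Λ X] : Module Λ (Twisted φ g X) :=
  Module.compHom X ((φ g⁻¹).toAlgHom.toRingHom)

/-- A module over another ring `A`, viewed as a `Λ`-module through a map `ι : Λ →ₐ[k] A`
(restriction of scalars). -/
def Res {A : Type} [Ring A] [Algebra k A] (_ι : Λ →ₐ[k] A) (M : Type) : Type := M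

instance Res.instAddCommGroup {A : Type} [Ring A] [Algebra k A] (ι : Λ →ₐ[k] A) (M : Type)
    [AddCommGroup M] : AddCommGroup (Res ι M) := inferInstanceAs (AddCommGroup M)

instance Res.instModule {A : Type} [Ring A] [Algebra k A] (ι : Λ →ₐ[k] A) (M : Type)
    [AddCommGroup M] [Module A M] : Module Λ (Res ι M) :=
  Module.compHom M ι.toRingHom

/-- `A`, together with an embedding `ι : Λ → A` and units `u g` (`g ∈ G`), is a realization of
the skew group algebra `ΛG`:  multiplication satisfies `g a · h b = g h · h⁻¹(a) b`
(equivalently the commutation rule below), and `A` is free as a left `Λ`-module with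
basis `{u g ∣ g ∈ G}`. -/
structure IsSkewGroupAlgebra (φ : G →* (Λ ≃ₐ[k] Λ)) (A : Type) [Ring A] [Algebra k A]
    (ι : Λ →ₐ[k] A) (u : G →* Aˣ) : Prop where
  skew_comm : ∀ (g : G) (a : Λ), (u g : A) * ι a = ι (φ g a) * (u g : A)
  free : ∀ x : A, ∃! c : G →₀ Λ, x = c.sum fun g a => (u g : A) * ι a

/-- `X` is a `g`-invariant module: `{}^{g}X ≅ X`. -/
def IsGInvariantAt (φ : G →* (Λ ≃ₐ[k] Λ)) (g : G) (X : Type) [AddCommGroup X] [Module Λ X] :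
    Prop := Nonempty (Twisted φ g X ≃ₗ[Λ] X)

/-- `X` is a `G`-invariant module: `{}^{g}X ≅ X` for all `g ∈ G`. -/
def IsGInvariant (φ : G →* (Λ ≃ₐ[k] Λ)) (X : Type) [AddCommGroup X] [Module Λ X] : Prop :=
  ∀ g : G, IsGInvariantAt φ g X

/-- The set `H_X = {g ∈ G ∣ {}^{g}X ≅ X}` (a subgroup of `G`). -/
def Hset (φ : G →* (Λ ≃ₐ[k] Λ)) (X : Type) [AddCommGroup X] [Module Λ X] : Set G :=
  {g : G | IsGInvariantAt φ g X}

/-- `T` is a complete set of left coset representatives for `H` in `G`. -/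
def IsLeftTransversal {G : Type} [Group G] (H T : Set G) : Prop :=
  ∀ g : G, ∃! t : G, t ∈ T ∧ t⁻¹ * g ∈ H

/-- The direct sum `⊕_{t ∈ T} {}^{t}X`. -/
def CosetSum (φ : G →* (Λ ≃ₐ[k] Λ)) (T : Set G) (X : Type) : Type :=
  ∀ t : T, Twisted φ (t : G) X

instance CosetSum.instAddCommGroup (φ : G →* (Λ ≃ₐ[k] Λ)) (T : Set G) (X : Type)
    [AddCommGroup X] : AddCommGroup (CosetSum φ T X) :=
  inferInstanceAs (AddCommGroup (∀ t : T, Twisted φ (t : G) X))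

instance CosetSum.instModule (φ : G →* (Λ ≃ₐ[k] Λ)) (T : Set G) (X : Type)
    [AddCommGroup X] [Module Λ X] : Module Λ (CosetSum φ T X) :=
  inferInstanceAs (Module Λ (∀ t : T, Twisted φ (t : G) X))

/-- The direct sum `⊕_{g ∈ G} {}^{g}X`. -/
def GSum (φ : G →* (Λ ≃ₐ[k] Λ)) (X : Type) : Type := ∀ g : G, Twisted φ g X

instance GSum.instAddCommGroup (φ : G →* (Λ ≃ₐ[k] Λ)) (X : Type) [AddCommGroup X] :
    AddCommGroup (GSum φ X) := inferInstanceAs (AddCommGroup (∀ g : G, Twisted φ g X))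

instance GSum.instModule (φ : G →* (Λ ≃ₐ[k] Λ)) (X : Type) [AddCommGroup X] [Module Λ X] :
    Module Λ (GSum φ X) := inferInstanceAs (Module Λ (∀ g : G, Twisted φ g X))

end Framework

/-- A module is indecomposable: it is nonzero and is not the direct sum of two nonzero
submodules. -/
def IsIndec (R X : Type) [Ring R] [AddCommGroup X] [Module R X] : Prop :=
  Nontrivial X ∧ ∀ p q : Submodule R X, IsCompl p q → p = ⊥ ∨ q = ⊥

/-- `X` is an indecomposable `G`-invariant module: it is nonzero, `G`-invariant, and does not
decompose as a direct sum of two nonzero `G`-invariant modules. -/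
def IsIndecGInvariant {k Λ G : Type} [Field k] [Ring Λ] [Algebra k Λ] [Group G]
    (φ : G →* (Λ ≃ₐ[k] Λ)) (X : Type) [AddCommGroup X] [Module Λ X] : Prop :=
  Nontrivial X ∧ IsGInvariant φ X ∧
    ∀ p q : Submodule Λ X, IsCompl p q →
      IsGInvariant φ p → IsGInvariant φ q → p = ⊥ ∨ q = ⊥

/-- `(M, θ)` is the module obtained from `X` by induction (extension of scalars) along the
ring homomorphism `j : R → S` : i.e. `θ : X → M` is `j`-semilinear and universal among
`j`-semilinear maps from `X` to `S`-modules.  For `j : Λ → ΛG` this characterizes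
`ΛG ⊗_Λ X` together with the canonical map `x ↦ 1 ⊗ x`. -/
structure IsInducedAlong {R S : Type} [Ring R] [Ring S] (j : R →+* S)
    (X : Type) [AddCommGroup X] [Module R X]
    (M : Type) [AddCommGroup M] [Module S M] (θ : X →+ M) : Prop where
  semilinear : ∀ (r : R) (x : X), θ (r • x) = j r • θ x
  universal : ∀ (N : Type) [AddCommGroup N] [Module S N] (f : X →+ N),
      (∀ (r : R) (x : X), f (r • x) = j r • f x) →
      ∃! F : M →ₗ[S] N, ∀ x : X, F (θ x) = f x

/-- An isomorphism of modules, with the two module structures given explicitly (used when the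
same underlying type carries two different module structures). -/
def ModIso (R : Type) [Semiring R] (M N : Type) [AddCommMonoid M] [AddCommMonoid N]
    (mM : Module R M) (mN : Module R N) : Prop :=
  Nonempty (@LinearEquiv R R _ _ (RingHom.id R) (RingHom.id R) RingHomInvPair.ids
    RingHomInvPair.ids M N _ _ mM mN)

/-- The scalar action of an explicitly given module structure. -/
def msmul {R M : Type} [Semiring R] [AddCommMonoid M] (m : Module R M) (r : R) (x : M) : M :=
  letI := m; r • x

/-- `X'` realizes the `ΛH`-module `ρ ⊗_k X` for the one-dimensional representation
(character) `χ` of `H`: there is an additive isomorphism `e : X' → X` (`l₀ ⊗ x ↦ x`)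
commuting with the `Λ`-action, and transforming the action of `h ∈ H` by the scalar `χ h`. -/
def IsCharTwist {k Λ H B : Type} [Field k] [Ring Λ] [Algebra k Λ] [Group H]
    [Ring B] [Algebra k B] (ιB : Λ →ₐ[k] B) (uB : H →* Bˣ) (χ : H →* kˣ)
    (X X' : Type) [AddCommGroup X] [Module B X] [AddCommGroup X'] [Module B X'] : Prop :=
  ∃ e : X' ≃+ X, (∀ (a : Λ) (x : X'), e (ιB a • x) = ιB a • e x) ∧
    ∀ (h : H) (x : X'), e (uB h • x) = algebraMap k B (χ h : k) • (uB h • e x)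

end

/-! ### Auxiliary development -/

noncomputable section AuxDev

open Finset

section Basic

variable {k Λ G : Type} [Field k] [Ring Λ] [Algebra k Λ] [Group G]

lemma phi_inv_cancel (φ : G →* (Λ ≃ₐ[k] Λ)) (g : G) (a : Λ) : φ g (φ g⁻¹ a) = a := by
  have h : φ g * φ g⁻¹ = 1 := by rw [← map_mul, mul_inv_cancel, map_one]
  rw [← AlgEquiv.mul_apply, h, AlgEquiv.one_apply]

lemma phi_inv_cancel' (φ : G →* (Λ ≃ₐ[k] Λ)) (g : G) (a : Λ) : φ g⁻¹ (φ g a) = a := by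
  have := phi_inv_cancel φ g⁻¹ a
  rwa [inv_inv] at this

lemma twisted_smul (φ : G →* (Λ ≃ₐ[k] Λ)) (g : G) (X : Type) [AddCommGroup X] [Module Λ X]
    (a : Λ) (x : X) :
    (a • (show Twisted φ g X from x) : Twisted φ g X) = (show Twisted φ g X from φ g⁻¹ a • x) :=
  rfl

/-- Indecomposability transfers to twists. -/
lemma isIndec_twisted (φ : G →* (Λ ≃ₐ[k] Λ)) {X : Type} [AddCommGroup X] [Module Λ X]
    (hX : IsIndec Λ X) (g : G) : IsIndec Λ (Twisted φ g X) := by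
  -- transfer of submodules
  let tr : Submodule Λ (Twisted φ g X) → Submodule Λ X := fun p =>
    { carrier := {x : X | x ∈ p}
      add_mem' := fun hx hy => p.add_mem hx hy
      zero_mem' := p.zero_mem
      smul_mem' := fun a x hx => by
        have h := p.smul_mem (φ g a) hx
        have : (φ g a • (show Twisted φ g X from x) : Twisted φ g X)
            = (show Twisted φ g X from a • x) := by
          rw [twisted_smul, phi_inv_cancel']
        rw [this] at h
        exact h }
  have htr_mem : ∀ (p : Submodule Λ (Twisted φ g X)) (x : X), x ∈ tr p ↔ x ∈ p :=
    fun p x => Iff.rfl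
  refine ⟨hX.1, fun p q hpq => ?_⟩
  have hc : IsCompl (tr p) (tr q) := by
    constructor
    · refine Submodule.disjoint_def.mpr fun x hx hx' => ?_
      exact Submodule.disjoint_def.mp hpq.disjoint x hx hx'
    · rw [codisjoint_iff]
      rw [Submodule.eq_top_iff']
      intro x
      have hx : (show Twisted φ g X from x) ∈ p ⊔ q := by
        rw [codisjoint_iff.mp hpq.codisjoint]; trivial
      obtain ⟨y, hy, z, hz, hyz⟩ := Submodule.mem_sup.mp hx
      exact Submodule.mem_sup.mpr ⟨y, hy, z, hz, hyz⟩
  rcases hX.2 (tr p) (tr q) hc with h | h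
  · left
    rw [Submodule.eq_bot_iff] at h ⊢
    exact fun x hx => h x hx
  · right
    rw [Submodule.eq_bot_iff] at h ⊢
    exact fun x hx => h x hx

end Basic

section EndRing

variable {Λ : Type} [Ring Λ]

lemma end_unit_or_nilpotent {Y : Type} [AddCommGroup Y] [Module Λ Y]
    [IsArtinian Λ Y] [IsNoetherian Λ Y]
    (hY : IsIndec Λ Y) (f : Module.End Λ Y) : IsUnit f ∨ IsNilpotent f := by
  obtain ⟨n, hn⟩ := Filter.eventually_atTop.mp (LinearMap.eventually_isCompl_ker_pow_range_pow f)
  have h := hn (n + 1) (Nat.le_succ n)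
  rcases hY.2 _ _ h with hk | hr
  · left
    have hinj : Function.Injective (f ^ (n + 1)) := by
      rw [← LinearMap.ker_eq_bot]; exact hk
    have hsurj : Function.Surjective (f ^ (n + 1)) := by
      rw [← LinearMap.range_eq_top]
      have h2 := codisjoint_iff.mp h.codisjoint
      rw [hk, bot_sup_eq] at h2
      exact h2
    exact (isUnit_pow_iff (Nat.succ_ne_zero n)).mp
      ((Module.End.isUnit_iff _).mpr ⟨hinj, hsurj⟩)
  · right
    exact ⟨n + 1, LinearMap.range_eq_bot.mp hr⟩

lemma end_sum_unit {Y : Type} [AddCommGroup Y] [Module Λ Y]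
    [IsArtinian Λ Y] [IsNoetherian Λ Y]
    (hY : IsIndec Λ Y) {ι : Type} (s : Finset ι) (f : ι → Module.End Λ Y)
    (hsum : ∑ i ∈ s, f i = 1) : ∃ i ∈ s, IsUnit (f i) := by
  classical
  haveI := hY.1
  induction s using Finset.induction_on generalizing f with
  | empty =>
    exfalso
    rw [Finset.sum_empty] at hsum
    obtain ⟨y, hy⟩ := exists_ne (0 : Y)
    have := LinearMap.congr_fun hsum y
    simp at this
    exact hy this.symm
  | insert a s ha ih =>
    rw [Finset.sum_insert ha] at hsum
    by_cases hu : IsUnit (f a)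
    · exact ⟨a, Finset.mem_insert_self a s, hu⟩
    · have hnil : IsNilpotent (f a) := (end_unit_or_nilpotent hY (f a)).resolve_left hu
      have hw : IsUnit (∑ i ∈ s, f i) := by
        have h1 : ∑ i ∈ s, f i = 1 - f a := eq_sub_of_add_eq' hsum
        rw [h1]
        exact hnil.isUnit_one_sub
      obtain ⟨w, hw'⟩ := hw
      have h2 : ∑ i ∈ s, ((↑w⁻¹ : Module.End Λ Y) * f i) = 1 := by
        rw [← Finset.mul_sum, ← hw', w.inv_mul]
      obtain ⟨i, his, hui⟩ := ih (fun i => (↑w⁻¹ : Module.End Λ Y) * f i) h2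
      refine ⟨i, Finset.mem_insert_of_mem his, ?_⟩
      have h3 : f i = (↑w : Module.End Λ Y) * ((↑w⁻¹ : Module.End Λ Y) * f i) := by
        rw [← mul_assoc, w.mul_inv, one_mul]
      rw [h3]
      exact w.isUnit.mul hui

end EndRing

section Exchange

variable {k Λ G : Type} [Field k] [Ring Λ] [Algebra k Λ] [Group G] [Fintype G]
variable (φ : G →* (Λ ≃ₐ[k] Λ))

/-- If an indecomposable module `Y` (over a finite-dimensional setting) is a direct summand
of `⊕_g {}^g X` with `X` indecomposable, then `Y ≅ {}^g X` for some `g`. -/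
lemma exchange {X Y : Type} [AddCommGroup X] [Module Λ X] [AddCommGroup Y] [Module Λ Y]
    [Module k Y] [IsScalarTower k Λ Y] [FiniteDimensional k Y]
    (hX : IsIndec Λ X) (hY : IsIndec Λ Y)
    (s : Y →ₗ[Λ] GSum φ X) (p : GSum φ X →ₗ[Λ] Y) (hps : p.comp s = LinearMap.id) :
    ∃ g : G, Nonempty (Y ≃ₗ[Λ] Twisted φ g X) := by
  classical
  haveI := hY.1
  haveI hNk : IsNoetherian k Y := inferInstance
  haveI hAk : IsArtinian k Y := inferInstance
  haveI : IsNoetherian Λ Y := isNoetherian_of_tower k hNk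
  haveI : IsArtinian Λ Y := isArtinian_of_tower k hAk
  -- projections and inclusions
  let π : ∀ g : G, GSum φ X →ₗ[Λ] Twisted φ g X := fun g =>
    { toFun := fun x => x g
      map_add' := fun x y => rfl
      map_smul' := fun a x => rfl }
  let inc : ∀ g : G, Twisted φ g X →ₗ[Λ] GSum φ X := fun g =>
    { toFun := fun v => Pi.single g v
      map_add' := fun v w => by
        funext t
        show (Pi.single g (v + w) : GSum φ X) t
            = (Pi.single g v : GSum φ X) t + (Pi.single g w : GSum φ X) t
        by_cases ht : t = g
        · subst ht; simp [Pi.single_eq_same]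
        · simp [Pi.single_eq_of_ne ht]
      map_smul' := fun a v => by
        funext t
        show (Pi.single g (a • v) : GSum φ X) t = a • ((Pi.single g v : GSum φ X) t)
        by_cases ht : t = g
        · subst ht; simp [Pi.single_eq_same]
        · simp [Pi.single_eq_of_ne ht] }
  have hsum : ∑ g : G, p.comp ((inc g).comp ((π g).comp s)) = (1 : Module.End Λ Y) := by
    apply LinearMap.ext; intro y
    rw [LinearMap.sum_apply]
    have h1 : ∑ g : G, (Pi.single g (s y g) : GSum φ X) = s y :=
      Finset.univ_sum_single (s y)
    calc ∑ g : G, (p.comp ((inc g).comp ((π g).comp s))) y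
        = ∑ g : G, p (Pi.single g (s y g)) := rfl
      _ = p (∑ g : G, Pi.single g (s y g)) := (map_sum p _ _).symm
      _ = p (s y) := congrArg p h1
      _ = y := LinearMap.congr_fun hps y
      _ = (1 : Module.End Λ Y) y := rfl
  obtain ⟨g, -, hu⟩ := end_sum_unit hY Finset.univ
    (fun g => p.comp ((inc g).comp ((π g).comp s))) hsum
  set u : Twisted φ g X →ₗ[Λ] Y := p.comp (inc g) with hu_def
  set v : Y →ₗ[Λ] Twisted φ g X := (π g).comp s with hv_def
  have huv : IsUnit (u.comp v) := by
    have : u.comp v = p.comp ((inc g).comp ((π g).comp s)) := by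
      apply LinearMap.ext; intro y; rfl
    rw [this]; exact hu
  obtain ⟨w, hw⟩ := huv
  have hw_app : ∀ q : Y, u (v q) = (↑w : Module.End Λ Y) q :=
    fun q => (LinearMap.congr_fun hw q).symm
  have hwinv : ∀ q : Y, (↑w⁻¹ : Module.End Λ Y) ((↑w : Module.End Λ Y) q) = q := by
    intro q
    rw [← Module.End.mul_apply, w.inv_mul, Module.End.one_apply]
  have hwinv' : ∀ q : Y, (↑w : Module.End Λ Y) ((↑w⁻¹ : Module.End Λ Y) q) = q := by
    intro q
    rw [← Module.End.mul_apply, w.mul_inv, Module.End.one_apply]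
  set e : Module.End Λ (Twisted φ g X) := (v.comp (↑w⁻¹ : Module.End Λ Y)).comp u with he_def
  have he_app : ∀ x, e x = v ((↑w⁻¹ : Module.End Λ Y) (u x)) := fun x => rfl
  have hee : ∀ x, e (e x) = e x := by
    intro x
    rw [he_app, he_app]
    congr 1
    rw [hw_app, hwinv]
  have hcompl : IsCompl (LinearMap.ker e) (LinearMap.range e) := by
    constructor
    · refine Submodule.disjoint_def.mpr fun x hx hx' => ?_
      obtain ⟨y, rfl⟩ := hx'
      rw [LinearMap.mem_ker] at hx
      rw [← hee y, hx]
    · rw [codisjoint_iff, Submodule.eq_top_iff']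
      intro x
      refine Submodule.mem_sup.mpr ⟨x - e x, ?_, e x, ⟨x, rfl⟩, by abel⟩
      rw [LinearMap.mem_ker, map_sub, hee, sub_self]
  rcases (isIndec_twisted φ hX g).2 _ _ hcompl with hk | hr
  · -- ker e = ⊥ : e is the identity, v is an isomorphism
    have hsurj : LinearMap.range e = ⊤ := by
      have h2 := codisjoint_iff.mp hcompl.codisjoint
      rwa [hk, bot_sup_eq] at h2
    have hid : ∀ x, e x = x := by
      intro x
      obtain ⟨y, rfl⟩ := LinearMap.range_eq_top.mp hsurj x
      rw [hee]
    refine ⟨g, ⟨LinearEquiv.ofLinear v ((↑w⁻¹ : Module.End Λ Y).comp u) ?_ ?_⟩⟩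
    · apply LinearMap.ext; intro x
      exact hid x
    · apply LinearMap.ext; intro q
      show (↑w⁻¹ : Module.End Λ Y) (u (v q)) = q
      rw [hw_app, hwinv]
  · -- range e = ⊥ : contradiction with Y nontrivial
    exfalso
    have he0 : e = 0 := LinearMap.range_eq_bot.mp hr
    have hv0 : ∀ q : Y, v q = 0 := by
      intro q
      have h1 : e (v q) = 0 := by rw [he0]; rfl
      have h2 : e (v q) = v q := by
        rw [he_app, hw_app, hwinv]
      rw [h2] at h1; exact h1
    obtain ⟨y, hy⟩ := exists_ne (0 : Y)
    apply hy
    have h3 : (↑w : Module.End Λ Y) y = 0 := by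
      rw [← hw_app, hv0, map_zero]
    have h4 := hwinv y
    rw [h3, map_zero] at h4
    exact h4.symm

end Exchange

/-! ### The skew group algebra: coefficients -/

section Coeff

variable {k Λ G : Type} [Field k] [Ring Λ] [Algebra k Λ] [Group G] [Fintype G]
variable {φ : G →* (Λ ≃ₐ[k] Λ)}
variable {A : Type} [Ring A] [Algebra k A] {ιA : Λ →ₐ[k] A} {uA : G →* Aˣ}

def skcoeff (hA : IsSkewGroupAlgebra φ A ιA uA) (x : A) : G →₀ Λ := (hA.free x).choose

lemma skcoeff_spec (hA : IsSkewGroupAlgebra φ A ιA uA) (x : A) :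
    x = (skcoeff hA x).sum fun g a => (uA g : A) * ιA a := (hA.free x).choose_spec.1

lemma skcoeff_unique (hA : IsSkewGroupAlgebra φ A ιA uA) {x : A} {c : G →₀ Λ}
    (h : x = c.sum fun g a => (uA g : A) * ιA a) : c = skcoeff hA x :=
  (hA.free x).choose_spec.2 c h

lemma skfsum (uA : G →* Aˣ) (ιA : Λ →ₐ[k] A) (c : G →₀ Λ) :
    (c.sum fun g a => (uA g : A) * ιA a) = ∑ g : G, (uA g : A) * ιA (c g) :=
  Finsupp.sum_fintype _ _ (fun g => by simp)

lemma skcoeff_spec' (hA : IsSkewGroupAlgebra φ A ιA uA) (x : A) :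
    x = ∑ g : G, (uA g : A) * ιA (skcoeff hA x g) := by
  rw [← skfsum]; exact skcoeff_spec hA x

lemma skcoeff_eq_of (hA : IsSkewGroupAlgebra φ A ιA uA) {x : A} {d : G → Λ}
    (h : x = ∑ g : G, (uA g : A) * ιA (d g)) (t : G) :
    skcoeff hA x t = d t := by
  have h2 : (Finsupp.equivFunOnFinite.symm d) = skcoeff hA x := by
    refine skcoeff_unique hA ?_
    rw [skfsum]
    simpa using h
  rw [← h2]
  simp

lemma skcoeff_single [DecidableEq G] (hA : IsSkewGroupAlgebra φ A ιA uA) (g : G) (a : Λ) :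
    ∀ t : G, skcoeff hA ((uA g : A) * ιA a) t = (if t = g then a else 0 : Λ) := by
  refine fun t => skcoeff_eq_of hA (d := fun t => if t = g then a else 0) ?_ t
  have h : ∀ t : G, (uA t : A) * ιA (if t = g then a else 0)
      = if t = g then (uA g : A) * ιA a else 0 := by
    intro t
    split
    · subst ‹t = g›; rfl
    · simp
  rw [Finset.sum_congr rfl fun t _ => h t, Finset.sum_ite_eq' Finset.univ g
    (fun _ => (uA g : A) * ιA a)]
  simp

lemma skcoeff_single_self (hA : IsSkewGroupAlgebra φ A ιA uA) (g : G) (a : Λ) :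
    skcoeff hA ((uA g : A) * ιA a) g = a := by
  classical
  rw [skcoeff_single hA g a g, if_pos rfl]

lemma skcoeff_single_ne (hA : IsSkewGroupAlgebra φ A ιA uA) (g : G) (a : Λ) {t : G}
    (ht : t ≠ g) : skcoeff hA ((uA g : A) * ιA a) t = 0 := by
  classical
  rw [skcoeff_single hA g a t, if_neg ht]

lemma u_one (uA : G →* Aˣ) : (uA (1 : G) : A) = 1 := by rw [map_one, Units.val_one]

lemma skcoeff_iota_self (hA : IsSkewGroupAlgebra φ A ιA uA) (a : Λ) :
    skcoeff hA (ιA a) 1 = a := by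
  have := skcoeff_single_self hA 1 a
  rwa [u_one, one_mul] at this

lemma skcoeff_iota_ne (hA : IsSkewGroupAlgebra φ A ιA uA) (a : Λ) {t : G} (ht : t ≠ 1) :
    skcoeff hA (ιA a) t = 0 := by
  have := skcoeff_single_ne hA 1 a ht
  rwa [u_one, one_mul] at this

lemma skcoeff_u_self (hA : IsSkewGroupAlgebra φ A ιA uA) (g : G) :
    skcoeff hA (uA g : A) g = 1 := by
  have := skcoeff_single_self hA g 1
  rwa [map_one, mul_one] at this

lemma skcoeff_u_ne (hA : IsSkewGroupAlgebra φ A ιA uA) (g : G) {t : G} (ht : t ≠ g) :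
    skcoeff hA (uA g : A) t = 0 := by
  have := skcoeff_single_ne hA g 1 ht
  rwa [map_one, mul_one] at this

lemma skcoeff_add (hA : IsSkewGroupAlgebra φ A ιA uA) (x y : A) (t : G) :
    skcoeff hA (x + y) t = skcoeff hA x t + skcoeff hA y t := by
  refine skcoeff_eq_of hA (d := fun t => skcoeff hA x t + skcoeff hA y t) ?_ t
  conv_lhs => rw [skcoeff_spec' hA x, skcoeff_spec' hA y]
  rw [← Finset.sum_add_distrib]
  simp [map_add, mul_add]

lemma skew_comm' (φ : G →* (Λ ≃ₐ[k] Λ)) (hA : IsSkewGroupAlgebra φ A ιA uA) (g : G) (a : Λ) :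
    ιA a * (uA g : A) = (uA g : A) * ιA (φ g⁻¹ a) := by
  rw [hA.skew_comm g (φ g⁻¹ a), phi_inv_cancel]

lemma u_mul_u (uA : G →* Aˣ) (g h : G) : (uA g : A) * (uA h : A) = (uA (g * h) : A) := by
  rw [← Units.val_mul, ← map_mul]

lemma u_inv_mul_u (uA : G →* Aˣ) (g : G) : (uA g⁻¹ : A) * (uA g : A) = 1 := by
  rw [u_mul_u, inv_mul_cancel, map_one, Units.val_one]

lemma u_mul_u_inv (uA : G →* Aˣ) (g : G) : (uA g : A) * (uA g⁻¹ : A) = 1 := by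
  rw [u_mul_u, mul_inv_cancel, map_one, Units.val_one]

lemma skcoeff_mul_iota (hA : IsSkewGroupAlgebra φ A ιA uA) (x : A) (a : Λ) (t : G) :
    skcoeff hA (x * ιA a) t = skcoeff hA x t * a := by
  refine skcoeff_eq_of hA (d := fun t => skcoeff hA x t * a) ?_ t
  conv_lhs => rw [skcoeff_spec' hA x]
  rw [Finset.sum_mul]
  simp [mul_assoc, ← map_mul]

lemma skcoeff_iota_mul (φ : G →* (Λ ≃ₐ[k] Λ)) (hA : IsSkewGroupAlgebra φ A ιA uA)
    (a : Λ) (x : A) (t : G) :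
    skcoeff hA (ιA a * x) t = φ t⁻¹ a * skcoeff hA x t := by
  refine skcoeff_eq_of hA (d := fun t => φ t⁻¹ a * skcoeff hA x t) ?_ t
  conv_lhs => rw [skcoeff_spec' hA x]
  rw [Finset.mul_sum]
  refine Finset.sum_congr rfl fun g _ => ?_
  rw [← mul_assoc, skew_comm' φ hA, mul_assoc, ← map_mul]

lemma skcoeff_u_mul (hA : IsSkewGroupAlgebra φ A ιA uA) (g : G) (x : A) (t : G) :
    skcoeff hA ((uA g : A) * x) t = skcoeff hA x (g⁻¹ * t) := by
  refine skcoeff_eq_of hA (d := fun t => skcoeff hA x (g⁻¹ * t)) ?_ t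
  conv_lhs => rw [skcoeff_spec' hA x]
  rw [Finset.mul_sum]
  refine Fintype.sum_equiv (Equiv.mulLeft g) _ _ fun h => ?_
  rw [← mul_assoc, u_mul_u]
  simp

lemma skcoeff_mul_uinv (φ : G →* (Λ ≃ₐ[k] Λ)) (hA : IsSkewGroupAlgebra φ A ιA uA)
    (x : A) (g : G) (t : G) :
    skcoeff hA (x * (uA g⁻¹ : A)) t = φ g (skcoeff hA x (t * g)) := by
  refine skcoeff_eq_of hA (d := fun t => φ g (skcoeff hA x (t * g))) ?_ t
  conv_lhs => rw [skcoeff_spec' hA x]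
  rw [Finset.sum_mul]
  refine Fintype.sum_equiv (Equiv.mulRight g⁻¹) _ _ fun h => ?_
  rw [mul_assoc, skew_comm' φ hA g⁻¹, inv_inv, ← mul_assoc, u_mul_u]
  simp

lemma skcoeff_key (φ : G →* (Λ ≃ₐ[k] Λ)) (hA : IsSkewGroupAlgebra φ A ιA uA)
    (a : A) (t : G) :
    ∑ g : G, (uA g⁻¹ : A) * ιA (φ t (skcoeff hA a (g⁻¹ * t))) = a * (uA t⁻¹ : A) := by
  conv_rhs => rw [skcoeff_spec' hA (a * (uA t⁻¹ : A))]
  refine Fintype.sum_equiv (Equiv.inv G) _ _ fun g => ?_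
  rw [show (Equiv.inv G) g = g⁻¹ from rfl, skcoeff_mul_uinv φ hA a t g⁻¹]

end Coeff

/-! ### The coinduced model of the induced module -/

section SHom

variable {k Λ G : Type} [Field k] [Ring Λ] [Algebra k Λ] [Group G] [Fintype G]
variable {φ : G →* (Λ ≃ₐ[k] Λ)}
variable {A : Type} [Ring A] [Algebra k A] (ιA : Λ →ₐ[k] A) {uA : G →* Aˣ}
variable (X : Type) [AddCommGroup X] [Module Λ X]

/-- The subgroup of `A → X` consisting of additive, `Λ`-semilinear maps. -/
def SHomP : AddSubgroup (A → X) where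
  carrier := {f | (∀ b b', f (b + b') = f b + f b') ∧ ∀ (l : Λ) (b : A), f (ιA l * b) = l • f b}
  zero_mem' := ⟨fun _ _ => by simp, fun _ _ => by simp⟩
  add_mem' := fun hf hg => ⟨fun b b' => by simp [hf.1 b b', hg.1 b b', Pi.add_apply]; abel,
    fun l b => by simp [hf.2 l b, hg.2 l b, smul_add]⟩
  neg_mem' := fun hf => ⟨fun b b' => by simp [hf.1 b b']; abel,
    fun l b => by simp [hf.2 l b]⟩

/-- `Hom_Λ(A, X)` as a type. -/
def SHom : Type := ↥(SHomP ιA X)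

instance : AddCommGroup (SHom ιA X) := inferInstanceAs (AddCommGroup ↥(SHomP ιA X))

lemma shom_map_add (f : SHom ιA X) (b b' : A) : f.1 (b + b') = f.1 b + f.1 b' := f.2.1 b b'

lemma shom_map_iota (f : SHom ιA X) (l : Λ) (b : A) : f.1 (ιA l * b) = l • f.1 b := f.2.2 l b

lemma shom_map_zero (f : SHom ιA X) : f.1 0 = 0 := by
  have h : f.1 0 = f.1 0 + f.1 0 := by
    have := f.2.1 0 0; simpa using this
  exact (left_eq_add.mp h)

/-- Evaluation at `b` as an additive homomorphism. -/
def shomEval (b : A) : SHom ιA X →+ X :=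
  AddMonoidHom.mk' (fun f => f.1 b) (fun f g => rfl)

lemma shom_map_sum (f : SHom ιA X) {ι : Type} (s : Finset ι) (c : ι → A) :
    f.1 (∑ i ∈ s, c i) = ∑ i ∈ s, f.1 (c i) :=
  map_sum (AddMonoidHom.mk' f.1 (fun a b => f.2.1 a b)) c s

instance : SMul A (SHom ιA X) :=
  ⟨fun a f => ⟨fun b => f.1 (b * a),
    ⟨fun b b' => by show f.1 ((b + b') * a) = f.1 (b * a) + f.1 (b' * a); rw [add_mul, f.2.1],
     fun l b => by show f.1 (ιA l * b * a) = l • f.1 (b * a); rw [mul_assoc, f.2.2]⟩⟩⟩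

lemma shom_smul_apply (a : A) (f : SHom ιA X) (b : A) : (a • f).1 b = f.1 (b * a) := rfl

instance : Module A (SHom ιA X) where
  smul := (· • ·)
  one_smul f := Subtype.ext (funext fun b => by rw [shom_smul_apply, mul_one])
  mul_smul a a' f := Subtype.ext (funext fun b => by
    rw [shom_smul_apply, shom_smul_apply, shom_smul_apply, mul_assoc])
  smul_zero a := Subtype.ext (funext fun b => rfl)
  smul_add a f g := Subtype.ext (funext fun b => rfl)
  add_smul a a' f := Subtype.ext (funext fun b => by
    rw [shom_smul_apply, mul_add, f.2.1]; rfl)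
  zero_smul f := Subtype.ext (funext fun b => by
    rw [shom_smul_apply, mul_zero, shom_map_zero]; rfl)

variable {ιA}

lemma shom_eval_eq (φ : G →* (Λ ≃ₐ[k] Λ)) (hA : IsSkewGroupAlgebra φ A ιA uA)
    (f : SHom ιA X) (b : A) :
    f.1 b = ∑ t : G, φ t (skcoeff hA b t) • f.1 (uA t : A) := by
  conv_lhs => rw [skcoeff_spec' hA b]
  rw [shom_map_sum]
  refine Finset.sum_congr rfl fun t _ => ?_
  rw [hA.skew_comm, shom_map_iota]

/-- The canonical semilinear map `X → Hom_Λ(A,X)`, `x ↦ (b ↦ (coeff of b at 1) • x)`. -/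
def shomUnit (hA : IsSkewGroupAlgebra φ A ιA uA) (x : X) : SHom ιA X :=
  ⟨fun b => skcoeff hA b 1 • x,
   ⟨fun b b' => by
      show skcoeff hA (b + b') 1 • x = skcoeff hA b 1 • x + skcoeff hA b' 1 • x
      rw [skcoeff_add hA, add_smul],
    fun l b => by
      show skcoeff hA (ιA l * b) 1 • x = l • (skcoeff hA b 1 • x)
      rw [skcoeff_iota_mul φ hA, inv_one, map_one, AlgEquiv.one_apply, mul_smul]⟩⟩

lemma shomUnit_apply (hA : IsSkewGroupAlgebra φ A ιA uA) (x : X) (b : A) :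
    (shomUnit X hA x).1 b = skcoeff hA b 1 • x := rfl

/-- `shomUnit` as an additive homomorphism. -/
def shomUnitHom (hA : IsSkewGroupAlgebra φ A ιA uA) : X →+ SHom ιA X :=
  AddMonoidHom.mk' (shomUnit X hA)
    (fun x y => Subtype.ext (funext fun b => by
      rw [shomUnit_apply, smul_add]; rfl))

lemma shom_reconstruct (φ : G →* (Λ ≃ₐ[k] Λ)) (hA : IsSkewGroupAlgebra φ A ιA uA)
    (f : SHom ιA X) :
    f = ∑ g : G, (uA g⁻¹ : A) • shomUnit X hA (f.1 (uA g : A)) := by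
  refine Subtype.ext (funext fun b => ?_)
  have h1 : (∑ g : G, (uA g⁻¹ : A) • shomUnit X hA (f.1 (uA g : A))).1 b
      = ∑ g : G, ((uA g⁻¹ : A) • shomUnit X hA (f.1 (uA g : A))).1 b :=
    map_sum (shomEval ιA X b) _ _
  rw [h1]
  have h2 : ∀ g : G, ((uA g⁻¹ : A) • shomUnit X hA (f.1 (uA g : A))).1 b
      = φ g (skcoeff hA b g) • f.1 (uA g : A) := by
    intro g
    rw [shom_smul_apply, shomUnit_apply, skcoeff_mul_uinv φ hA, one_mul]
  rw [Finset.sum_congr rfl fun g _ => h2 g]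
  exact shom_eval_eq X φ hA f b

/-- The coinduced module is a model of the induced module. -/
lemma shom_isInduced (φ : G →* (Λ ≃ₐ[k] Λ)) (hA : IsSkewGroupAlgebra φ A ιA uA) :
    IsInducedAlong ιA.toRingHom X (SHom ιA X) (shomUnitHom X hA) := by
  constructor
  · -- semすilinearity
    intro l x
    refine Subtype.ext (funext fun b => ?_)
    show (shomUnit X hA (l • x)).1 b = (ιA l • shomUnit X hA x).1 b
    rw [shomUnit_apply, shom_smul_apply, shomUnit_apply, skcoeff_mul_iota hA, mul_smul]
  · -- universal property
    intro N _ _ f hf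
    refine ⟨{ toFun := fun h => ∑ g : G, (uA g⁻¹ : A) • f (h.1 (uA g : A))
              map_add' := fun h h' => by
                rw [← Finset.sum_add_distrib]
                refine Finset.sum_congr rfl fun g _ => ?_
                rw [show (h + h').1 (uA g : A) = h.1 (uA g : A) + h'.1 (uA g : A) from rfl,
                  map_add, smul_add]
              map_smul' := fun a h => by
                show ∑ g : G, (uA g⁻¹ : A) • f ((a • h).1 (uA g : A))
                    = a • ∑ g : G, (uA g⁻¹ : A) • f (h.1 (uA g : A))
                have hexp : ∀ g : G, f ((a • h).1 (uA g : A))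
                    = ∑ t : G, ιA (φ t (skcoeff hA a (g⁻¹ * t))) • f (h.1 (uA t : A)) := by
                  intro g
                  rw [shom_smul_apply, shom_eval_eq X φ hA h ((uA g : A) * a)]
                  rw [map_sum f]
                  refine Finset.sum_congr rfl fun t _ => ?_
                  rw [skcoeff_u_mul hA, hf]
                  rfl
                rw [Finset.smul_sum]
                rw [Finset.sum_congr rfl fun g _ => by rw [hexp g]]
                rw [Finset.sum_congr rfl fun g (_ : g ∈ Finset.univ) => Finset.smul_sum]
                rw [Finset.sum_comm]
                refine Finset.sum_congr rfl fun t _ => ?_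
                rw [Finset.sum_congr rfl fun g (_ : g ∈ Finset.univ) => (smul_smul _ _ _)]
                rw [← Finset.sum_smul, skcoeff_key φ hA a t, ← smul_smul] },
          fun x => ?_, fun F' hF' => ?_⟩
    · -- F (θ x) = f x
      show ∑ g : G, (uA g⁻¹ : A) • f ((shomUnit X hA x).1 (uA g : A)) = f x
      rw [Finset.sum_eq_single 1]
      · rw [shomUnit_apply, skcoeff_u_self hA, one_smul, inv_one, map_one, Units.val_one,
          one_smul]
      · intro g _ hg
        rw [shomUnit_apply, skcoeff_u_ne hA g (fun h => hg h.symm), zero_smul, map_zero,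
          smul_zero]
      · intro h; exact absurd (Finset.mem_univ 1) h
    · -- uniqueness
      have hF'' : ∀ x : X, F' (shomUnit X hA x) = f x := hF'
      apply LinearMap.ext; intro h
      conv_lhs => rw [shom_reconstruct X φ hA h]
      rw [map_sum]
      show _ = ∑ g : G, (uA g⁻¹ : A) • f (h.1 (uA g : A))
      refine Finset.sum_congr rfl fun g _ => ?_
      rw [map_smul, hF'']

end SHom

/-! ### Uniqueness of induced modules, and the `Λ`-structure of the induced module -/

section Unique

lemma inducedAlong_unique {R S : Type} [Ring R] [Ring S] (j : R →+* S)
    (X : Type) [AddCommGroup X] [Module R X]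
    (M : Type) [AddCommGroup M] [Module S M] (θ : X →+ M) (hM : IsInducedAlong j X M θ)
    (M' : Type) [AddCommGroup M'] [Module S M'] (θ' : X →+ M')
    (hM' : IsInducedAlong j X M' θ') :
    ∃ E : M ≃ₗ[S] M', ∀ x, E (θ x) = θ' x := by
  obtain ⟨F, hF, -⟩ := hM.universal M' θ' hM'.semilinear
  obtain ⟨F', hF', -⟩ := hM'.universal M θ hM.semilinear
  obtain ⟨I, -, hIu⟩ := hM.universal M θ hM.semilinear
  obtain ⟨I', -, hIu'⟩ := hM'.universal M' θ' hM'.semilinear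
  have h1 : F'.comp F = LinearMap.id := by
    have a1 := hIu (F'.comp F) (fun x => by
      rw [LinearMap.comp_apply, hF, hF'])
    have a2 := hIu LinearMap.id (fun x => rfl)
    rw [a1, ← a2]
  have h2 : F.comp F' = LinearMap.id := by
    have a1 := hIu' (F.comp F') (fun x => by
      rw [LinearMap.comp_apply, hF', hF])
    have a2 := hIu' LinearMap.id (fun x => rfl)
    rw [a1, ← a2]
  exact ⟨LinearEquiv.ofLinear F F' h2 h1, hF⟩

variable {k Λ G : Type} [Field k] [Ring Λ] [Algebra k Λ] [Group G] [Fintype G]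
variable {A : Type} [Ring A] [Algebra k A] {ιA : Λ →ₐ[k] A} {uA : G →* Aˣ}

/-- Any model of the induced module restricts, over `Λ`, to `⊕_g {}^g X`. -/
lemma exists_gsum_addequiv (φ : G →* (Λ ≃ₐ[k] Λ)) (hA : IsSkewGroupAlgebra φ A ιA uA)
    (X : Type) [AddCommGroup X] [Module Λ X]
    (M : Type) [AddCommGroup M] [Module A M] (θ : X →+ M)
    (hM : IsInducedAlong ιA.toRingHom X M θ) :
    ∃ e : M ≃+ GSum φ X, ∀ (a : Λ) (m : M), e (ιA a • m) = a • e m := by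
  classical
  obtain ⟨E, -⟩ := inducedAlong_unique ιA.toRingHom X M θ hM (SHom ιA X)
    (shomUnitHom X hA) (shom_isInduced X φ hA)
  -- the additive iso SHom ≃+ GSum
  let εhom : SHom ιA X →+ GSum φ X :=
    AddMonoidHom.mk' (fun f => fun g => (f.1 (uA g⁻¹ : A) : X)) (fun f f' => rfl)
  have hε_inj : Function.Injective εhom := by
    rw [injective_iff_map_eq_zero]
    intro f hf
    have h1 : ∀ t : G, f.1 (uA t : A) = 0 := by
      intro t
      have h2 : f.1 (uA t⁻¹⁻¹ : A) = 0 := congrFun hf t⁻¹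
      rwa [inv_inv] at h2
    refine Subtype.ext (funext fun b => ?_)
    rw [shom_eval_eq X φ hA f b]
    show ∑ t : G, φ t (skcoeff hA b t) • f.1 (uA t : A) = 0
    rw [Finset.sum_congr rfl fun t _ => by rw [h1 t, smul_zero]]
    simp
  have hε_surj : Function.Surjective εhom := by
    intro x
    let y : G → X := fun g => x g
    refine ⟨⟨fun b => ∑ g : G, φ g⁻¹ (skcoeff hA b g⁻¹) • y g,
      ⟨fun b b' => ?_, fun l b => ?_⟩⟩, ?_⟩
    · show ∑ g : G, φ g⁻¹ (skcoeff hA (b + b') g⁻¹) • y g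
        = (∑ g : G, φ g⁻¹ (skcoeff hA b g⁻¹) • y g)
          + ∑ g : G, φ g⁻¹ (skcoeff hA b' g⁻¹) • y g
      rw [← Finset.sum_add_distrib]
      refine Finset.sum_congr rfl fun g _ => ?_
      rw [skcoeff_add hA, map_add, add_smul]
    · show ∑ g : G, φ g⁻¹ (skcoeff hA (ιA l * b) g⁻¹) • y g
        = l • ∑ g : G, φ g⁻¹ (skcoeff hA b g⁻¹) • y g
      rw [Finset.smul_sum]
      refine Finset.sum_congr rfl fun g _ => ?_
      rw [skcoeff_iota_mul φ hA, inv_inv, map_mul, phi_inv_cancel', mul_smul]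
    · funext t
      show ∑ g : G, φ g⁻¹ (skcoeff hA (uA t⁻¹ : A) g⁻¹) • y g = x t
      rw [Finset.sum_eq_single t]
      · rw [skcoeff_u_self hA, map_one, one_smul]
      · intro g _ hg
        rw [skcoeff_u_ne hA t⁻¹ (inv_injective.ne hg), map_zero, zero_smul]
      · intro h; exact absurd (Finset.mem_univ t) h
  let ε : SHom ιA X ≃+ GSum φ X := AddEquiv.ofBijective εhom ⟨hε_inj, hε_surj⟩
  refine ⟨E.toAddEquiv.trans ε, fun a m => ?_⟩
  show ε (E (ιA a • m)) = a • ε (E m)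
  rw [map_smul]
  generalize E m = f
  funext g
  show (ιA a • f).1 (uA g⁻¹ : A) = (a • (ε f : GSum φ X)) g
  rw [shom_smul_apply, hA.skew_comm g⁻¹ a, shom_map_iota]
  rfl

end Unique

end AuxDev

/-- **Lemma 2.4(2).** For finite dimensional indecomposable `Λ`-modules `X`, `Y`:
`ΛG ⊗_Λ X ≅ ΛG ⊗_Λ Y` as `ΛG`-modules if and only if `Y ≅ {}^{g}X` for some `g ∈ G`. -/
theorem induced_modules_iso_iff_twist_iso
    (k Λ G : Type) [Field k] [IsAlgClosed k] [Ring Λ] [Algebra k Λ]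
    [Group G] [Fintype G] (hchar : (Fintype.card G : k) ≠ 0)
    (φ : G →* (Λ ≃ₐ[k] Λ))
    (A : Type) [Ring A] [Algebra k A] (ιA : Λ →ₐ[k] A) (uA : G →* Aˣ)
    (hA : IsSkewGroupAlgebra φ A ιA uA)
    (X : Type) [AddCommGroup X] [Module Λ X] [Module k X] [IsScalarTower k Λ X]
    [FiniteDimensional k X] (hX : IsIndec Λ X)
    (Y : Type) [AddCommGroup Y] [Module Λ Y] [Module k Y] [IsScalarTower k Λ Y]
    [FiniteDimensional k Y] (hY : IsIndec Λ Y)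
    (MX : Type) [AddCommGroup MX] [Module A MX] (θX : X →+ MX)
    (hMX : IsInducedAlong ιA.toRingHom X MX θX)
    (MY : Type) [AddCommGroup MY] [Module A MY] (θY : Y →+ MY)
    (hMY : IsInducedAlong ιA.toRingHom Y MY θY) :
    Nonempty (MX ≃ₗ[A] MY) ↔ ∃ g : G, Nonempty (Y ≃ₗ[Λ] Twisted φ g X) := by
  classical
  constructor
  · rintro ⟨E⟩
    obtain ⟨eX, heX⟩ := exists_gsum_addequiv φ hA X MX θX hMX
    obtain ⟨eY, heY⟩ := exists_gsum_addequiv φ hA Y MY θY hMY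
    let W0 : GSum φ Y ≃+ GSum φ X := (eY.symm.trans E.symm.toAddEquiv).trans eX
    have hW : ∀ (a : Λ) (z : GSum φ Y), W0 (a • z) = a • W0 z := by
      intro a z
      have h1 : eY.symm (a • z) = ιA a • eY.symm z := by
        apply eY.injective
        rw [AddEquiv.apply_symm_apply, heY, AddEquiv.apply_symm_apply]
      show eX (E.symm (eY.symm (a • z))) = a • eX (E.symm (eY.symm z))
      rw [h1, LinearEquiv.map_smul E.symm (ιA a), heX]
    let W : GSum φ Y ≃ₗ[Λ] GSum φ X := { W0 with map_smul' := hW }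
    let j₁ : Y →ₗ[Λ] GSum φ Y :=
      { toFun := fun y => Pi.single (1 : G) y
        map_add' := fun y y' => by
          funext t
          show (Pi.single (1 : G) (show Twisted φ 1 Y from y + y') : GSum φ Y) t
              = (Pi.single (1 : G) (show Twisted φ 1 Y from y) : GSum φ Y) t
                + (Pi.single (1 : G) (show Twisted φ 1 Y from y') : GSum φ Y) t
          by_cases ht : t = 1
          · subst ht; rw [Pi.single_eq_same, Pi.single_eq_same, Pi.single_eq_same]; rfl
          · rw [Pi.single_eq_of_ne ht, Pi.single_eq_of_ne ht, Pi.single_eq_of_ne ht, add_zero]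
        map_smul' := fun a y => by
          funext t
          show (Pi.single (1 : G) (show Twisted φ 1 Y from a • y) : GSum φ Y) t
              = a • ((Pi.single (1 : G) (show Twisted φ 1 Y from y) : GSum φ Y) t)
          by_cases ht : t = 1
          · subst ht
            rw [Pi.single_eq_same, Pi.single_eq_same]
            show a • y = φ (1 : G)⁻¹ a • y
            rw [inv_one, map_one, AlgEquiv.one_apply]
          · rw [Pi.single_eq_of_ne ht, Pi.single_eq_of_ne ht, smul_zero] }
    let val1 : GSum φ Y → Y := fun z => z 1
    let p₁ : GSum φ Y →ₗ[Λ] Y :=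
      { toFun := val1
        map_add' := fun z z' => rfl
        map_smul' := fun a z => by
          show φ (1 : G)⁻¹ a • val1 z = a • val1 z
          rw [inv_one, map_one, AlgEquiv.one_apply] }
    refine exchange φ hX hY (W.toLinearMap.comp j₁) (p₁.comp W.symm.toLinearMap) ?_
    apply LinearMap.ext; intro y
    show p₁ (W.symm (W (j₁ y))) = y
    rw [LinearEquiv.symm_apply_apply]
    show (Pi.single (1 : G) (show Twisted φ 1 Y from y) : GSum φ Y) 1 = y
    rw [Pi.single_eq_same]
  · rintro ⟨g, ⟨e⟩⟩
    -- maps between the induced modules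
    have harg1 : ∀ (l : Λ) (x : X),
        ((φ g l) • (show Twisted φ g X from x) : Twisted φ g X) = (l • x : X) := by
      intro l x
      show φ g⁻¹ (φ g l) • x = l • x
      rw [phi_inv_cancel']
    have hesadd : ∀ x x' : X, e.symm (x + x') = e.symm x + e.symm x' :=
      fun x x' => e.symm.map_add x x'
    let f1 : X →+ MY := AddMonoidHom.mk'
      (fun x => (uA g⁻¹ : A) • θY (e.symm x))
      (fun x x' => by
        show (uA g⁻¹ : A) • θY (e.symm (x + x'))
            = (uA g⁻¹ : A) • θY (e.symm x) + (uA g⁻¹ : A) • θY (e.symm x')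
        rw [hesadd, map_add, smul_add])
    have hf1 : ∀ (l : Λ) (x : X), f1 (l • x) = ιA.toRingHom l • f1 x := by
      intro l x
      show (uA g⁻¹ : A) • θY (e.symm (l • x)) = ιA l • ((uA g⁻¹ : A) • θY (e.symm x))
      rw [← harg1 l x, LinearEquiv.map_smul e.symm (φ g l), hMY.semilinear (φ g l),
        smul_smul, smul_smul]
      congr 1
      show (uA g⁻¹ : A) * ιA (φ g l) = ιA l * (uA g⁻¹ : A)
      rw [hA.skew_comm g⁻¹ (φ g l), phi_inv_cancel']
    obtain ⟨F, hF, -⟩ := hMX.universal MY f1 hf1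
    have headd : ∀ y y' : Y, (e (y + y') : X) = e y + e y' := fun y y' => e.map_add y y'
    let f2 : Y →+ MX := AddMonoidHom.mk'
      (fun y => (uA g : A) • θX (e y))
      (fun y y' => by
        show (uA g : A) • θX (e (y + y')) = (uA g : A) • θX (e y) + (uA g : A) • θX (e y')
        rw [headd]; exact (congrArg _ (map_add θX (e y) (e y'))).trans (smul_add _ _ _))
    have hf2 : ∀ (l : Λ) (y : Y), f2 (l • y) = ιA.toRingHom l • f2 y := by
      intro l y
      show (uA g : A) • θX (e (l • y)) = ιA l • ((uA g : A) • θX (e y))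
      have h1 : e (l • y) = ((φ g⁻¹ l) • (show X from e y) : X) := e.map_smul l y
      rw [h1, hMX.semilinear (φ g⁻¹ l), smul_smul, smul_smul]
      congr 1
      exact (skew_comm' φ hA g l).symm
    obtain ⟨F', hF', -⟩ := hMY.universal MX f2 hf2
    obtain ⟨I, -, hIu⟩ := hMX.universal MX θX hMX.semilinear
    obtain ⟨I', -, hI'u⟩ := hMY.universal MY θY hMY.semilinear
    have h1 : F'.comp F = LinearMap.id := by
      have a1 := hIu (F'.comp F) (fun x => by
        rw [LinearMap.comp_apply, hF]
        show F' ((uA g⁻¹ : A) • θY (e.symm x)) = θX x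
        rw [map_smul, hF']
        show (uA g⁻¹ : A) • ((uA g : A) • θX (e (e.symm x))) = θX x
        rw [smul_smul, u_inv_mul_u, one_smul]; exact congrArg θX (e.apply_symm_apply x))
      have a2 := hIu LinearMap.id (fun x => rfl)
      rw [a1, ← a2]
    have h2 : F.comp F' = LinearMap.id := by
      have a1 := hI'u (F.comp F') (fun y => by
        rw [LinearMap.comp_apply, hF']
        show F ((uA g : A) • θX (e y)) = θY y
        rw [map_smul, hF (e y)]
        show (uA g : A) • ((uA g⁻¹ : A) • θY (e.symm (e y))) = θY y
        rw [smul_smul, u_mul_u_inv, one_smul, e.symm_apply_apply])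
      have a2 := hI'u LinearMap.id (fun y => rfl)
      rw [a1, ← a2]
    exact ⟨LinearEquiv.ofLinear F F' h2 h1⟩
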